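/- Let q ≥ 1, let a : Fin (3q) → ℕ with a i > 0 for all i, and let s : ℕ satisfy ∑_i a i = q · s. In R = MvPolynomial (Option (Fin q)) ℤ write x = X none and y_j = X (some j), let ι = Fin (3q) ⊕ (Fin q × Fin 3), and define v : ι → R by v (inl i) = (a i) · x and v (inr (j, _)) = y_j. Then the following are equivalent: (1) there exist a finite partition π of ι into nonempty blocks and signs ε : blocks of π → ℤ, each ε B equal to 1 or −1 with ε B₀ = 1 for at least one block B₀, such that ∑_{B ∈ π} ε B · ∏_{j ∈ B} v j = s · (∑_{j} y_j) · x; (2) there exists a finite partition ρ of Fin (3q) such that every block B of ρ has B.card = 3 and ∑_{i ∈ B} a i = s. -/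

import Mathlib

open Finset

noncomputable section Stmt6Aux

variable {q : ℕ}

/-- Exponent vector of a block. -/
def dB6 (q : ℕ) (B : Finset (Fin (3*q) ⊕ (Fin q × Fin 3))) : Option (Fin q) →₀ ℕ :=
  Finsupp.single none B.toLeft.card + ∑ p ∈ B.toRight, Finsupp.single (some p.1) 1

/-- Exponent vector of the monomial `x * y_j`. -/
def e6 (q : ℕ) (j : Fin q) : Option (Fin q) →₀ ℕ :=
  Finsupp.single none 1 + Finsupp.single (some j) 1

lemma dB6_apply_none (B : Finset (Fin (3*q) ⊕ (Fin q × Fin 3))) :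
    dB6 q B none = B.toLeft.card := by
  simp [dB6, Finsupp.finset_sum_apply, Finsupp.single_apply]

lemma dB6_apply_some (B : Finset (Fin (3*q) ⊕ (Fin q × Fin 3))) (k : Fin q) :
    dB6 q B (some k) = ∑ p ∈ B.toRight, if p.1 = k then 1 else 0 := by
  simp [dB6, Finsupp.finset_sum_apply, Finsupp.single_apply]

lemma e6_apply_none (j : Fin q) : e6 q j none = 1 := by
  simp [e6]

lemma e6_apply_some (j k : Fin q) : e6 q j (some k) = if j = k then 1 else 0 := by
  simp [e6, Finsupp.single_apply]

lemma e6_inj : Function.Injective (e6 q) := by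
  intro j k h
  have h1 := DFunLike.congr_fun h (some k)
  rw [e6_apply_some, e6_apply_some, if_pos rfl] at h1
  by_contra hne
  rw [if_neg hne] at h1
  omega

lemma toLeft_card_of_dB6 {B : Finset (Fin (3*q) ⊕ (Fin q × Fin 3))} {j : Fin q}
    (h : dB6 q B = e6 q j) : B.toLeft.card = 1 := by
  have := DFunLike.congr_fun h none
  rwa [dB6_apply_none, e6_apply_none] at this

lemma exists_inr_of_dB6 {B : Finset (Fin (3*q) ⊕ (Fin q × Fin 3))} {j : Fin q}
    (h : dB6 q B = e6 q j) : ∃ c : Fin 3, Sum.inr (j, c) ∈ B := by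
  have h1 := DFunLike.congr_fun h (some j)
  rw [dB6_apply_some, e6_apply_some, if_pos rfl] at h1
  have h2 : ∃ p ∈ B.toRight, p.1 = j := by
    by_contra hno
    push_neg at hno
    have : ∑ p ∈ B.toRight, (if p.1 = j then 1 else 0) = 0 :=
      Finset.sum_eq_zero fun p hp => if_neg (hno p hp)
    omega
  obtain ⟨p, hp, hpj⟩ := h2
  exact ⟨p.2, by rwa [← hpj, Prod.mk.eta, ← Finset.mem_toRight]⟩

open MvPolynomial in
lemma prod_block6 (a : Fin (3*q) → ℕ)
    (v : Fin (3*q) ⊕ (Fin q × Fin 3) → MvPolynomial (Option (Fin q)) ℤ)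
    (hv1 : ∀ i, v (Sum.inl i) = (a i : MvPolynomial (Option (Fin q)) ℤ) * X none)
    (hv2 : ∀ (j : Fin q) (c : Fin 3), v (Sum.inr (j, c)) = X (some j))
    (B : Finset (Fin (3*q) ⊕ (Fin q × Fin 3))) :
    ∏ z ∈ B, v z = C (∏ i ∈ B.toLeft, (a i : ℤ)) * monomial (dB6 q B) 1 := by
  conv_lhs => rw [← Finset.toLeft_disjSum_toRight (u := B)]
  rw [Finset.prod_disjSum]
  have h1 : ∏ x ∈ B.toLeft, v (Sum.inl x)
      = C (∏ i ∈ B.toLeft, (a i : ℤ)) * monomial (Finsupp.single none B.toLeft.card) 1 := by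
    calc ∏ x ∈ B.toLeft, v (Sum.inl x)
        = ∏ x ∈ B.toLeft, (C (a x : ℤ) * X none) := by
          refine Finset.prod_congr rfl fun x _ => ?_
          rw [hv1 x, map_natCast (C : ℤ →+* MvPolynomial (Option (Fin q)) ℤ)]
      _ = C (∏ i ∈ B.toLeft, (a i : ℤ)) * (X none) ^ B.toLeft.card := by
          rw [Finset.prod_mul_distrib, Finset.prod_const, map_prod]
      _ = _ := by rw [X_pow_eq_monomial]
  have h2 : ∏ p ∈ B.toRight, v (Sum.inr p)
      = monomial (∑ p ∈ B.toRight, Finsupp.single (some p.1) 1) (1 : ℤ) := by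
    rw [monomial_sum_one]
    refine Finset.prod_congr rfl fun p _ => ?_
    rw [show v (Sum.inr p) = X (some p.1) from by
      rw [show p = (p.1, p.2) from rfl]; exact hv2 p.1 p.2]
    rw [← pow_one (X (some p.1) : MvPolynomial (Option (Fin q)) ℤ), X_pow_eq_monomial]
  rw [h1, h2, mul_assoc, monomial_mul, mul_one, dB6]

open MvPolynomial in
lemma coeff_extract6 (a : Fin (3*q) → ℕ) (s : ℕ)
    (v : Fin (3*q) ⊕ (Fin q × Fin 3) → MvPolynomial (Option (Fin q)) ℤ)
    (hv1 : ∀ i, v (Sum.inl i) = (a i : MvPolynomial (Option (Fin q)) ℤ) * X none)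
    (hv2 : ∀ (j : Fin q) (c : Fin 3), v (Sum.inr (j, c)) = X (some j))
    (P : Finset (Finset (Fin (3*q) ⊕ (Fin q × Fin 3))))
    (ε : Finset (Fin (3*q) ⊕ (Fin q × Fin 3)) → ℤ)
    (hsum : ∑ B ∈ P, (ε B : MvPolynomial (Option (Fin q)) ℤ) * ∏ z ∈ B, v z
      = (s : MvPolynomial (Option (Fin q)) ℤ) * (∑ j : Fin q, X (some j)) * X none)
    (j : Fin q) [∀ B, Decidable (dB6 q B = e6 q j)] :
    ∑ B ∈ P, (if dB6 q B = e6 q j then ε B * ∏ i ∈ B.toLeft, (a i : ℤ) else 0) = (s : ℤ) := by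
  have hL : ∑ B ∈ P, (ε B : MvPolynomial (Option (Fin q)) ℤ) * ∏ z ∈ B, v z
      = ∑ B ∈ P, monomial (dB6 q B) (ε B * ∏ i ∈ B.toLeft, (a i : ℤ)) := by
    refine Finset.sum_congr rfl fun B _ => ?_
    rw [prod_block6 a v hv1 hv2 B, ← eq_intCast (C : ℤ →+* MvPolynomial (Option (Fin q)) ℤ) (ε B),
      ← mul_assoc, ← map_mul, C_mul_monomial, mul_one]
  have hR : (s : MvPolynomial (Option (Fin q)) ℤ) * (∑ j : Fin q, X (some j)) * X none
      = ∑ k : Fin q, monomial (e6 q k) (s : ℤ) := by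
    rw [Finset.mul_sum, Finset.sum_mul]
    refine Finset.sum_congr rfl fun k _ => ?_
    rw [show ((s : ℕ) : MvPolynomial (Option (Fin q)) ℤ) = C ((s : ℕ) : ℤ) from
      (map_natCast (C : ℤ →+* MvPolynomial (Option (Fin q)) ℤ) s).symm]
    rw [C_mul_X_eq_monomial, ← pow_one (X none : MvPolynomial (Option (Fin q)) ℤ),
      X_pow_eq_monomial, monomial_mul, mul_one]
    congr 1
    rw [e6, add_comm]
  have h := congrArg (MvPolynomial.coeff (e6 q j)) (hL ▸ hR ▸ hsum)
  rw [MvPolynomial.coeff_sum, MvPolynomial.coeff_sum] at h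
  have hRj : ∑ k : Fin q, MvPolynomial.coeff (e6 q j) (monomial (e6 q k) (s : ℤ)) = (s : ℤ) := by
    have hk : ∀ k : Fin q, MvPolynomial.coeff (e6 q j) (monomial (e6 q k) (s : ℤ))
        = if k = j then (s : ℤ) else 0 := by
      intro k
      rw [MvPolynomial.coeff_monomial]
      by_cases hkj : k = j
      · rw [if_pos (by rw [hkj]), if_pos hkj]
      · rw [if_neg (fun hh => hkj (e6_inj hh)), if_neg hkj]
    rw [Finset.sum_congr rfl fun k _ => hk k, Finset.sum_ite_eq' Finset.univ j fun _ => (s : ℤ)]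
    simp
  rw [hRj] at h
  rw [← h]
  refine Finset.sum_congr rfl fun B _ => ?_
  rw [MvPolynomial.coeff_monomial]
  by_cases hd : dB6 q B = e6 q j
  · rw [if_pos hd, if_pos hd]
  · rw [if_neg hd, if_neg hd]

end Stmt6Aux

theorem stmt_6 (q : ℕ) (hq : 1 ≤ q) (a : Fin (3 * q) → ℕ) (ha : ∀ i, 0 < a i)
    (s : ℕ) (hs : ∑ i, a i = q * s)
    (v : Fin (3 * q) ⊕ (Fin q × Fin 3) → MvPolynomial (Option (Fin q)) ℤ)
    (hv1 : ∀ i, v (Sum.inl i) =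
      (a i : MvPolynomial (Option (Fin q)) ℤ) * MvPolynomial.X none)
    (hv2 : ∀ (j : Fin q) (c : Fin 3), v (Sum.inr (j, c)) = MvPolynomial.X (some j)) :
    (∃ π : Finpartition (Finset.univ : Finset (Fin (3 * q) ⊕ (Fin q × Fin 3))),
      ∃ ε : Finset (Fin (3 * q) ⊕ (Fin q × Fin 3)) → ℤ,
        (∀ B ∈ π.parts, ε B = 1 ∨ ε B = -1) ∧ (∃ B₀ ∈ π.parts, ε B₀ = 1) ∧
        ∑ B ∈ π.parts, (ε B : MvPolynomial (Option (Fin q)) ℤ) * ∏ j ∈ B, v j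
          = (s : MvPolynomial (Option (Fin q)) ℤ) *
              (∑ j : Fin q, MvPolynomial.X (some j)) * MvPolynomial.X none) ↔
    (∃ ρ : Finpartition (Finset.univ : Finset (Fin (3 * q))),
      ∀ B ∈ ρ.parts, B.card = 3 ∧ ∑ i ∈ B, a i = s) := by
  classical
  constructor
  · rintro ⟨π, ε, hε, -, hsum⟩
    have hco := fun j => coeff_extract6 a s v hv1 hv2 π.parts ε hsum j
    -- choose the unique left element of the relevant blocks
    have hex : ∀ B : Finset (Fin (3*q) ⊕ (Fin q × Fin 3)), ∃ i : Fin (3*q),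
        ∀ j, dB6 q B = e6 q j → B.toLeft = {i} := by
      intro B
      by_cases h : ∃ j, dB6 q B = e6 q j
      · obtain ⟨j, hj⟩ := h
        obtain ⟨i, hi⟩ := Finset.card_eq_one.mp (toLeft_card_of_dB6 hj)
        exact ⟨i, fun _ _ => hi⟩
      · exact ⟨⟨0, by omega⟩, fun j hj => absurd ⟨j, hj⟩ h⟩
    choose iOf hiOf using hex
    have hexj : ∀ B : Finset (Fin (3*q) ⊕ (Fin q × Fin 3)), ∃ j0 : Fin q,
        ∀ j, dB6 q B = e6 q j → j0 = j := by
      intro B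
      by_cases h : ∃ j, dB6 q B = e6 q j
      · obtain ⟨j, hj⟩ := h
        exact ⟨j, fun j' hj' => e6_inj (hj ▸ hj')⟩
      · exact ⟨⟨0, hq⟩, fun j hj => absurd ⟨j, hj⟩ h⟩
    choose jOf hjOf using hexj
    set F : Fin q → Finset (Finset (Fin (3*q) ⊕ (Fin q × Fin 3))) :=
      fun j => π.parts.filter (fun B => dB6 q B = e6 q j) with hFdef
    set G : Finset (Finset (Fin (3*q) ⊕ (Fin q × Fin 3))) :=
      π.parts.filter (fun B => ∃ j, dB6 q B = e6 q j) with hGdef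
    have hFmem : ∀ j B, B ∈ F j ↔ B ∈ π.parts ∧ dB6 q B = e6 q j := by
      intro j B; rw [hFdef]; exact Finset.mem_filter
    have hGmem : ∀ B, B ∈ G ↔ B ∈ π.parts ∧ ∃ j, dB6 q B = e6 q j := by
      intro B; rw [hGdef]; exact Finset.mem_filter
    have hFsub : ∀ j, F j ⊆ G := fun j B hB =>
      (hGmem B).mpr ⟨((hFmem j B).mp hB).1, ⟨j, ((hFmem j B).mp hB).2⟩⟩
    have hFG : ∀ j, F j = G.filter (fun B => jOf B = j) := by
      intro j
      ext B
      constructor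
      · intro hB
        obtain ⟨hp, hd⟩ := (hFmem j B).mp hB
        exact Finset.mem_filter.mpr ⟨(hGmem B).mpr ⟨hp, ⟨j, hd⟩⟩, hjOf B j hd⟩
      · intro hB
        obtain ⟨hBG, hj⟩ := Finset.mem_filter.mp hB
        obtain ⟨hp, j0, hd⟩ := (hGmem B).mp hBG
        have hj0 : j0 = j := by rw [← hjOf B j0 hd, hj]
        exact (hFmem j B).mpr ⟨hp, by rwa [hj0] at hd⟩
    have key : ∀ j, ∑ B ∈ F j, ε B * (a (iOf B) : ℤ) = (s : ℤ) := by
      intro j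
      have h0 := hco j
      rw [← Finset.sum_filter] at h0
      rw [← h0]
      refine Finset.sum_congr (by rw [hFdef]) fun B hB => ?_
      have hd := ((hFmem j B).mp hB).2
      rw [hiOf B j hd, Finset.prod_singleton]
    have hG_inl : ∀ B ∈ G, Sum.inl (iOf B) ∈ B := by
      intro B hB
      obtain ⟨hp, j, hd⟩ := (hGmem B).mp hB
      have h1 : iOf B ∈ B.toLeft := by
        rw [hiOf B j hd]; exact Finset.mem_singleton_self _
      exact Finset.mem_toLeft.mp h1
    have hInjG : ∀ B ∈ G, ∀ B' ∈ G, iOf B = iOf B' → B = B' := by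
      intro B hB B' hB' hEq
      by_contra hne
      have hdisj := π.disjoint ((hGmem B).mp hB).1 ((hGmem B').mp hB').1 hne
      exact Finset.disjoint_left.mp hdisj (hG_inl B hB) (by rw [hEq]; exact hG_inl B' hB')
    have hGsum : ∑ B ∈ G, ε B * (a (iOf B) : ℤ) = (q : ℤ) * (s : ℤ) := by
      have hfib := Finset.sum_fiberwise_of_maps_to (g := jOf) (s := G) (t := Finset.univ)
        (fun B _ => Finset.mem_univ (jOf B)) (fun B => ε B * (a (iOf B) : ℤ))
      have h2 : ∑ j : Fin q, ∑ B ∈ G.filter (fun B => jOf B = j), ε B * (a (iOf B) : ℤ)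
          = ∑ _j : Fin q, (s : ℤ) :=
        Finset.sum_congr rfl fun j _ => by rw [← hFG j]; exact key j
      rw [← hfib, h2, Finset.sum_const, Finset.card_univ, Fintype.card_fin, nsmul_eq_mul]
    have hle : ∀ B ∈ G, ε B * (a (iOf B) : ℤ) ≤ (a (iOf B) : ℤ) := by
      intro B hB
      have h0 : (0:ℤ) ≤ (a (iOf B) : ℤ) := Int.natCast_nonneg _
      rcases hε B ((hGmem B).mp hB).1 with h1 | h1 <;> rw [h1] <;> nlinarith
    have himg : ∑ B ∈ G, (a (iOf B) : ℤ) = ∑ i ∈ G.image iOf, (a i : ℤ) :=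
      (Finset.sum_image (f := fun i => (a i : ℤ)) hInjG).symm
    have htot : ∑ i : Fin (3*q), (a i : ℤ) = (q : ℤ) * (s : ℤ) := by
      rw [← Nat.cast_sum, hs, Nat.cast_mul]
    have hsub : ∑ i ∈ G.image iOf, (a i : ℤ) ≤ ∑ i : Fin (3*q), (a i : ℤ) :=
      Finset.sum_le_sum_of_subset_of_nonneg (Finset.subset_univ _)
        (fun i _ _ => Int.natCast_nonneg _)
    have heqA : ∑ B ∈ G, ε B * (a (iOf B) : ℤ) = ∑ B ∈ G, (a (iOf B) : ℤ) := by
      refine le_antisymm (Finset.sum_le_sum hle) ?_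
      rw [hGsum, himg]
      calc ∑ i ∈ G.image iOf, (a i : ℤ) ≤ ∑ i : Fin (3*q), (a i : ℤ) := hsub
        _ = (q : ℤ) * (s : ℤ) := htot
    have heps1 : ∀ B ∈ G, ε B = 1 := by
      intro B hB
      have h1 := (Finset.sum_eq_sum_iff_of_le hle).mp heqA B hB
      have hapos : (0:ℤ) < (a (iOf B) : ℤ) := by exact_mod_cast ha (iOf B)
      have : ε B * (a (iOf B) : ℤ) = 1 * (a (iOf B) : ℤ) := by rw [one_mul]; exact h1
      exact mul_right_cancel₀ (ne_of_gt hapos) this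
    have himgsum : ∑ i ∈ G.image iOf, (a i : ℤ) = (q : ℤ) * (s : ℤ) := by
      rw [← himg, ← heqA, hGsum]
    have himage : G.image iOf = Finset.univ := by
      rw [Finset.eq_univ_iff_forall]
      intro i
      by_contra hi
      have hlt := Finset.sum_lt_sum_of_subset (Finset.subset_univ (G.image iOf))
        (Finset.mem_univ i) hi (by exact_mod_cast ha i)
        (fun j _ _ => Int.natCast_nonneg (a j))
      rw [himgsum, htot] at hlt
      exact lt_irrefl _ hlt
    have hGcard : G.card = 3*q := by
      have h1 := Finset.card_image_of_injOn (f := iOf) (s := G)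
        (fun x hx y hy => hInjG x hx y hy)
      rw [himage, Finset.card_univ, Fintype.card_fin] at h1
      omega
    have hFcard_le : ∀ j, (F j).card ≤ 3 := by
      intro j
      have hc : ∀ B : Finset (Fin (3*q) ⊕ (Fin q × Fin 3)), ∃ c : Fin 3,
          B ∈ F j → Sum.inr (j, c) ∈ B := by
        intro B
        by_cases h : B ∈ F j
        · obtain ⟨c, hc⟩ := exists_inr_of_dB6 ((hFmem j B).mp h).2
          exact ⟨c, fun _ => hc⟩
        · exact ⟨0, fun hh => absurd hh h⟩
      choose cOf hcOf using hc
      have hinj : Set.InjOn cOf ↑(F j) := by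
        intro B hB B' hB' hEq
        by_contra hne
        have hBm : B ∈ F j := Finset.mem_coe.mp hB
        have hB'm : B' ∈ F j := Finset.mem_coe.mp hB'
        have hdisj := π.disjoint ((hFmem j B).mp hBm).1 ((hFmem j B').mp hB'm).1 hne
        exact Finset.disjoint_left.mp hdisj (hcOf B hBm) (by rw [hEq]; exact hcOf B' hB'm)
      have h2 := Finset.card_le_card_of_injOn cOf (fun B _ => Finset.mem_univ _) hinj
      simpa using h2
    have hFsumcard : ∑ j : Fin q, (F j).card = 3*q := by
      have h1 := Finset.card_eq_sum_card_fiberwise (f := jOf) (s := G) (t := Finset.univ)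
        (fun B _ => Finset.mem_univ _)
      rw [hGcard] at h1
      rw [Finset.sum_congr rfl fun j _ => by rw [hFG j], ← h1]
    have hFcard : ∀ j, (F j).card = 3 := by
      intro j
      by_contra hne
      have hlt : (F j).card < 3 := lt_of_le_of_ne (hFcard_le j) hne
      have h2 : ∑ j' : Fin q, (F j').card < ∑ _j' : Fin q, 3 :=
        Finset.sum_lt_sum (fun j' _ => hFcard_le j') ⟨j, Finset.mem_univ j, hlt⟩
      rw [hFsumcard] at h2
      simp only [Finset.sum_const, Finset.card_univ, Fintype.card_fin, smul_eq_mul] at h2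
      omega
    set S : Fin q → Finset (Fin (3*q)) := fun j => (F j).image iOf with hSdef
    have hSinj : ∀ j, ∀ x ∈ F j, ∀ y ∈ F j, iOf x = iOf y → x = y :=
      fun j x hx y hy h => hInjG x (hFsub j hx) y (hFsub j hy) h
    have hScard : ∀ j, (S j).card = 3 := by
      intro j
      rw [hSdef]
      rw [Finset.card_image_of_injOn (fun x hx y hy => hSinj j x hx y hy), hFcard j]
    have hSsum : ∀ j, ∑ i ∈ S j, a i = s := by
      intro j
      have hZ : ∑ i ∈ S j, (a i : ℤ) = (s : ℤ) := by
        rw [hSdef]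
        rw [Finset.sum_image (fun x hx y hy h => hSinj j x hx y hy h), ← key j]
        exact Finset.sum_congr rfl fun B hB => by rw [heps1 B (hFsub j hB), one_mul]
      exact_mod_cast hZ
    have hSdisj : ∀ j j', j ≠ j' → Disjoint (S j) (S j') := by
      intro j j' hne
      rw [Finset.disjoint_left]
      intro i hi hi'
      rw [hSdef] at hi hi'
      obtain ⟨B, hB, hBi⟩ := Finset.mem_image.mp hi
      obtain ⟨B', hB', hB'i⟩ := Finset.mem_image.mp hi'
      have hBB : B = B' := hInjG B (hFsub j hB) B' (hFsub j' hB') (by rw [hBi, hB'i])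
      have hd := ((hFmem j B).mp hB).2
      have hd' := ((hFmem j' B').mp hB').2
      rw [← hBB] at hd'
      exact hne (e6_inj (hd ▸ hd'))
    have hScover : ∀ i : Fin (3*q), ∃ j, i ∈ S j := by
      intro i
      have hi : i ∈ G.image iOf := by rw [himage]; exact Finset.mem_univ i
      obtain ⟨B, hB, hBi⟩ := Finset.mem_image.mp hi
      obtain ⟨hp, j, hd⟩ := (hGmem B).mp hB
      exact ⟨j, by rw [hSdef]; exact Finset.mem_image.mpr ⟨B, (hFmem j B).mpr ⟨hp, hd⟩, hBi⟩⟩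
    refine ⟨⟨Finset.univ.image S, ?_, ?_, ?_⟩, ?_⟩
    · rw [Finset.supIndep_iff_pairwiseDisjoint]
      intro x hx y hy hne
      simp only [Finset.coe_image, Finset.coe_univ, Set.image_univ, Set.mem_range] at hx hy
      obtain ⟨j, rfl⟩ := hx
      obtain ⟨j', rfl⟩ := hy
      exact hSdisj j j' (fun h => hne (by rw [h]))
    · ext i
      simp only [Finset.mem_sup, Finset.mem_image, Finset.mem_univ, true_and, id_eq,
        iff_true]
      obtain ⟨j, hj⟩ := hScover i
      exact ⟨S j, ⟨j, rfl⟩, hj⟩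
    · intro hbot
      obtain ⟨j, _, hj⟩ := Finset.mem_image.mp hbot
      have h1 := hScard j
      rw [hj] at h1
      simp at h1
    · intro B hB
      obtain ⟨j, _, rfl⟩ := Finset.mem_image.mp hB
      exact ⟨hScard j, hSsum j⟩
  · rintro ⟨ρ, hρ⟩
    have hcardparts : ρ.parts.card = q := by
      have h1 := ρ.sum_card_parts
      rw [Finset.card_univ, Fintype.card_fin] at h1
      rw [Finset.sum_congr rfl (fun B hB => (hρ B hB).1), Finset.sum_const,
        smul_eq_mul] at h1
      omega
    have hpcoe : Fintype.card {x // x ∈ ρ.parts} = q := by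
      rw [Fintype.card_coe]; exact hcardparts
    let E : Fin q ≃ {x // x ∈ ρ.parts} := (Fintype.equivFinOfCardEq hpcoe).symm
    have hB3 : ∀ B : {x // x ∈ ρ.parts},
        Fintype.card {i // i ∈ (B : Finset (Fin (3*q)))} = 3 := fun B => by
      rw [Fintype.card_coe]; exact (hρ B B.2).1
    let FB : ∀ B : {x // x ∈ ρ.parts}, Fin 3 ≃ {i // i ∈ (B : Finset (Fin (3*q)))} :=
      fun B => (Fintype.equivFinOfCardEq (hB3 B)).symm
    let f : Fin q × Fin 3 → Fin (3*q) := fun p => ↑(FB (E p.1) p.2)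
    have hfmem : ∀ p : Fin q × Fin 3, f p ∈ (E p.1 : {x // x ∈ ρ.parts}).1 :=
      fun p => (FB (E p.1) p.2).2
    have hfinj : Function.Injective f := by
      rintro ⟨j, c⟩ ⟨j', c'⟩ hEq
      have hjj : j = j' := by
        by_contra hne
        have hEne : (E (j, c).1).1 ≠ (E (j', c').1).1 := by
          intro hcc
          exact hne (E.injective (Subtype.ext hcc))
        have hdisj := ρ.disjoint (E (j, c).1).2 (E (j', c').1).2 hEne
        exact Finset.disjoint_left.mp hdisj (hfmem (j, c)) (hEq ▸ hfmem (j', c'))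
      subst hjj
      have h2 : FB (E j) c = FB (E j) c' := Subtype.ext hEq
      rw [Prod.mk.injEq]
      exact ⟨rfl, (FB (E j)).injective h2⟩
    have hfbij : Function.Bijective f :=
      (Fintype.bijective_iff_injective_and_card f).mpr ⟨hfinj, by simp [mul_comm]⟩
    have hsumj : ∀ j : Fin q, ∑ c : Fin 3, a (f (j, c)) = s := by
      intro j
      have h1 : ∑ c : Fin 3, a (f (j, c)) = ∑ i ∈ (E j).1, a i := by
        rw [← Finset.sum_coe_sort ((E j).1) a]
        exact Equiv.sum_comp (FB (E j)) (fun x => a ↑x)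
      rw [h1]
      exact (hρ _ (E j).2).2
    let g : Fin q × Fin 3 → Finset (Fin (3*q) ⊕ (Fin q × Fin 3)) :=
      fun p => {Sum.inl (f p), Sum.inr p}
    have hginj : Function.Injective g := by
      intro p p' hEq
      have h1 : Sum.inr p ∈ g p' := hEq ▸ (by simp [g])
      simp only [g, Finset.mem_insert, Finset.mem_singleton, reduceCtorEq, false_or] at h1
      exact Sum.inr.inj h1
    have hgdisj : ∀ p p', p ≠ p' → Disjoint (g p) (g p') := by
      intro p p' hne
      rw [Finset.disjoint_left]
      intro z hz hz'
      simp only [g, Finset.mem_insert, Finset.mem_singleton] at hz hz'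
      rcases hz with rfl | rfl <;> rcases hz' with h' | h'
      · exact hne (hfinj (Sum.inl.inj h'))
      · exact absurd h' (by simp)
      · exact absurd h' (by simp)
      · exact hne (Sum.inr.inj h')
    refine ⟨⟨Finset.univ.image g, ?_, ?_, ?_⟩, fun _ => 1, fun B _ => Or.inl rfl, ?_, ?_⟩
    · rw [Finset.supIndep_iff_pairwiseDisjoint]
      intro x hx y hy hne
      simp only [Finset.coe_image, Finset.coe_univ, Set.image_univ, Set.mem_range] at hx hy
      obtain ⟨p, rfl⟩ := hx
      obtain ⟨p', rfl⟩ := hy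
      exact hgdisj p p' (fun h => hne (by rw [h]))
    · ext z
      simp only [Finset.mem_sup, Finset.mem_image, Finset.mem_univ, true_and, id_eq,
        iff_true]
      cases z with
      | inl i =>
        obtain ⟨p, hp⟩ := hfbij.2 i
        exact ⟨g p, ⟨p, rfl⟩, by simp [g, hp]⟩
      | inr p => exact ⟨g p, ⟨p, rfl⟩, by simp [g]⟩
    · intro hbot
      obtain ⟨p, _, hp⟩ := Finset.mem_image.mp hbot
      have h1 : Sum.inr p ∈ (⊥ : Finset (Fin (3*q) ⊕ (Fin q × Fin 3))) :=
        hp ▸ (by simp [g])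
      simp at h1
    · exact ⟨g (⟨0, hq⟩, 0), Finset.mem_image_of_mem g (Finset.mem_univ _), rfl⟩
    · calc ∑ B ∈ Finset.univ.image g,
            (((1:ℤ) : MvPolynomial (Option (Fin q)) ℤ)) * ∏ z ∈ B, v z
          = ∑ p : Fin q × Fin 3, ∏ z ∈ g p, v z := by
            rw [Finset.sum_image (fun x _ y _ h => hginj h)]
            simp
        _ = ∑ p : Fin q × Fin 3, (a (f p) : MvPolynomial (Option (Fin q)) ℤ) *
              MvPolynomial.X none * MvPolynomial.X (some p.1) := by
            refine Finset.sum_congr rfl fun p _ => ?_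
            rw [show g p = {Sum.inl (f p), Sum.inr p} from rfl]
            rw [Finset.prod_pair (by simp)]
            rw [hv1, show v (Sum.inr p) = MvPolynomial.X (some p.1) from by
              rw [show p = (p.1, p.2) from rfl]; exact hv2 p.1 p.2]
        _ = ∑ j : Fin q, ∑ c : Fin 3, (a (f (j, c)) : MvPolynomial (Option (Fin q)) ℤ) *
              MvPolynomial.X none * MvPolynomial.X (some j) := by
            rw [Fintype.sum_prod_type]
        _ = ∑ j : Fin q, (s : MvPolynomial (Option (Fin q)) ℤ) *
              MvPolynomial.X none * MvPolynomial.X (some j) := by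
            refine Finset.sum_congr rfl fun j _ => ?_
            rw [← Finset.sum_mul, ← Finset.sum_mul, ← Nat.cast_sum, hsumj j]
        _ = (s : MvPolynomial (Option (Fin q)) ℤ) *
              (∑ j : Fin q, MvPolynomial.X (some j)) * MvPolynomial.X none := by
            rw [Finset.mul_sum, Finset.sum_mul]
            exact Finset.sum_congr rfl fun j _ => by ring
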